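/- Let n ≥ 1 and let 𝒪 ⊆ ℕ^n be a finite nonempty order ideal with bounding box B = {α ∈ ℕ^n : α_i ≤ m_i for all i}, where m_i = max{α_i : α ∈ 𝒪}. For u in the closed border ∂̄B = B ∪ ∂B = {α ∈ ℕ^n : α_i ≤ m_i + 1 for all i}, let f(u) = {i ∈ [n] : u + e_i ∉ ∂̄B} = {i ∈ [n] : u_i = m_i + 1}. Then in ℚ[[y_1, …, y_n]]: Σ_{α ∈ ℕ^n} ind_𝒪(α) y^α = Σ_{u ∈ ∂̄B} y^u · Σ_{β ∈ ℕ^{f(u)}} (ind_𝒪(u) + |β|) y^β, where ℕ^{f(u)} = {β ∈ ℕ^n : β_i = 0 for i ∉ f(u)}. -/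

import Mathlib

/-- An order ideal in ℕ^n: a set of exponent vectors closed under componentwise division. -/
def IsOrderIdeal {n : ℕ} (O : Set (Fin n →₀ ℕ)) : Prop :=
  ∀ α ∈ O, ∀ β : Fin n →₀ ℕ, β ≤ α → β ∈ O

/-- The border of a set `C ⊆ ℕ^n`: `∂C = {α + e_i : α ∈ C, i} \ C`. -/
def border {n : ℕ} (C : Set (Fin n →₀ ℕ)) : Set (Fin n →₀ ℕ) :=
  {γ | ∃ α ∈ C, ∃ i : Fin n, γ = α + Finsupp.single i 1} \ C

/-- The closed higher borders: `∂̄⁰O = O`, `∂̄ᵏO = ∂(∂̄ᵏ⁻¹O) ∪ ∂̄ᵏ⁻¹O`. -/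
def closedBorder {n : ℕ} (O : Set (Fin n →₀ ℕ)) : ℕ → Set (Fin n →₀ ℕ)
  | 0 => O
  | k + 1 => border (closedBorder O k) ∪ closedBorder O k

/-- The higher borders: `∂⁰O = O`, `∂ᵏO = ∂(∂̄ᵏ⁻¹O)`. -/
def borderIter {n : ℕ} (O : Set (Fin n →₀ ℕ)) : ℕ → Set (Fin n →₀ ℕ)
  | 0 => O
  | k + 1 => border (closedBorder O k)

/-- The index of `α` relative to `O`: the minimal `k` with `α ∈ ∂̄ᵏO`. -/
noncomputable def ind {n : ℕ} (O : Set (Fin n →₀ ℕ)) (α : Fin n →₀ ℕ) : ℕ :=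
  sInf {k | α ∈ closedBorder O k}

/-- Total degree of an exponent vector. -/
def deg {n : ℕ} (α : Fin n →₀ ℕ) : ℕ := ∑ i, α i

/-- The multivariate formal power series with prescribed coefficients. -/
noncomputable def seriesOfCoeff {n : ℕ} (f : (Fin n →₀ ℕ) → ℚ) : MvPowerSeries (Fin n) ℚ := f

/-- `ℕ^S`: exponent vectors supported inside `S`. -/
def NS {n : ℕ} (S : Set (Fin n)) : Set (Fin n →₀ ℕ) := {β | ∀ i ∉ S, β i = 0}

lemma deg_add {n : ℕ} (a b : Fin n →₀ ℕ) : deg (a + b) = deg a + deg b := by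
  simp [deg, Finsupp.add_apply, Finset.sum_add_distrib]

lemma deg_eq_zero {n : ℕ} {a : Fin n →₀ ℕ} (h : deg a = 0) : a = 0 := by
  ext i
  have := Finset.sum_eq_zero_iff.mp h i (Finset.mem_univ i)
  simpa using this

lemma mem_closedBorder_iff {n : ℕ} (O : Set (Fin n →₀ ℕ)) (k : ℕ) (α : Fin n →₀ ℕ) :
    α ∈ closedBorder O k ↔ ∃ β ∈ O, ∃ γ, α = β + γ ∧ deg γ ≤ k := by
  induction k generalizing α with
  | zero =>
    simp only [closedBorder, Nat.le_zero]
    constructor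
    · intro h; exact ⟨α, h, 0, by simp, by simp [deg]⟩
    · rintro ⟨β, hβ, γ, rfl, hγ⟩
      rw [deg_eq_zero hγ]; simpa using hβ
  | succ k ih =>
    constructor
    · rintro (⟨⟨δ, hδ, i, rfl⟩, -⟩ | h)
      · obtain ⟨β, hβ, γ, rfl, hγ⟩ := ih δ |>.mp hδ
        refine ⟨β, hβ, γ + Finsupp.single i 1, by rw [add_assoc], ?_⟩
        rw [deg_add]
        have : deg (Finsupp.single i (1:ℕ)) = 1 := by
          simp [deg, Finsupp.single_apply]
        omega
      · obtain ⟨β, hβ, γ, rfl, hγ⟩ := ih α |>.mp h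
        exact ⟨β, hβ, γ, rfl, hγ.trans (Nat.le_succ k)⟩
    · rintro ⟨β, hβ, γ, rfl, hγ⟩
      by_cases hα : β + γ ∈ closedBorder O k
      · exact Or.inr hα
      · left
        have hk : ¬ deg γ ≤ k := fun h => hα ((ih _).mpr ⟨β, hβ, γ, rfl, h⟩)
        have hγ1 : 1 ≤ deg γ := by omega
        have hne : γ ≠ 0 := by intro h; rw [h] at hγ1; simp [deg] at hγ1
        obtain ⟨i, hi⟩ : ∃ i, γ i ≠ 0 := by
          by_contra h; push_neg at h; exact hne (Finsupp.ext h)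
        have hle : Finsupp.single i 1 ≤ γ := by
          intro j
          rcases eq_or_ne i j with rfl | hj
          · simpa [Finsupp.single_apply] using Nat.one_le_iff_ne_zero.mpr hi
          · simp [Finsupp.single_apply, hj]
        have hγeq : γ - Finsupp.single i 1 + Finsupp.single i 1 = γ :=
          tsub_add_cancel_of_le hle
        refine ⟨⟨β + (γ - Finsupp.single i 1), ?_, i, by rw [add_assoc, hγeq]⟩, hα⟩
        refine (ih _).mpr ⟨β, hβ, γ - Finsupp.single i 1, rfl, ?_⟩
        have h2 : deg (γ - Finsupp.single i 1) + deg (Finsupp.single i (1:ℕ)) = deg γ := by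
          rw [← deg_add, hγeq]
        have h1 : deg (Finsupp.single i (1:ℕ)) = 1 := by
          simp [deg, Finsupp.single_apply]
        omega

lemma ind_split {n : ℕ} (O : Set (Fin n →₀ ℕ)) (hO : IsOrderIdeal O) (hne : O.Nonempty)
    (α u : Fin n →₀ ℕ) (hu : u ≤ α) (hβ : ∀ β ∈ O, β ≤ α → β ≤ u) :
    ind O α = ind O u + deg (α - u) := by
  have h0 : (0 : Fin n →₀ ℕ) ∈ O := by
    obtain ⟨a, ha⟩ := hne; exact hO a ha 0 zero_le
  have huα : u + (α - u) = α := add_tsub_cancel_of_le hu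
  have hdegα : deg α = deg u + deg (α - u) := by rw [← deg_add, huα]
  have hmemu : u ∈ closedBorder O (deg u) :=
    (mem_closedBorder_iff O _ u).mpr ⟨0, h0, u, by simp, le_rfl⟩
  have hmemα : α ∈ closedBorder O (deg α) :=
    (mem_closedBorder_iff O _ α).mpr ⟨0, h0, α, by simp, le_rfl⟩
  have hk₀ : ind O u ∈ {k | u ∈ closedBorder O k} := Nat.sInf_mem ⟨deg u, hmemu⟩
  have hk₁ : ind O α ∈ {k | α ∈ closedBorder O k} := Nat.sInf_mem ⟨deg α, hmemα⟩
  obtain ⟨β, hβO, γ, hγ, hdγ⟩ := (mem_closedBorder_iff O _ u).mp hk₀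
  have hupper : ind O α ≤ ind O u + deg (α - u) := by
    refine Nat.sInf_le ((mem_closedBorder_iff O _ α).mpr ⟨β, hβO, γ + (α - u), ?_, ?_⟩)
    · rw [← add_assoc, ← hγ, huα]
    · rw [deg_add]; omega
  obtain ⟨β', hβ'O, γ', hγ', hdγ'⟩ := (mem_closedBorder_iff O _ α).mp hk₁
  have hβ'α : β' ≤ α := by rw [hγ']; exact le_add_right le_rfl
  have hβ'u : β' ≤ u := hβ β' hβ'O hβ'α
  have huβ' : β' + (u - β') = u := add_tsub_cancel_of_le hβ'u
  have hdegu : deg u = deg β' + deg (u - β') := by rw [← deg_add, huβ']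
  have hdγ'' : deg α = deg β' + deg γ' := by rw [hγ', deg_add]
  have hlow : ind O u ≤ ind O α - deg (α - u) := by
    refine Nat.sInf_le ((mem_closedBorder_iff O _ u).mpr ⟨β', hβ'O, u - β', huβ'.symm, ?_⟩)
    omega
  omega

lemma coeff_seriesOfCoeff {n : ℕ} (f : (Fin n →₀ ℕ) → ℚ) (d : Fin n →₀ ℕ) :
    MvPowerSeries.coeff d (seriesOfCoeff f) = f d :=
  rfl

/-- Let `O ⊆ ℕ^n` be a finite nonempty order ideal with bounding box `B`, with extreme corner
`(m₁,…,mₙ)`, `mᵢ = max{αᵢ : α ∈ O}`.  The closed border of `B` is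
`∂̄B = {u : ∀ i, uᵢ ≤ mᵢ + 1}` (the points `u ≤ M` where `Mᵢ = mᵢ + 1`), and the free
directions at `u ∈ ∂̄B` are `f(u) = {i : uᵢ = mᵢ + 1}`.  Then
`Σ_α ind_O(α) y^α = Σ_{u ∈ ∂̄B} y^u · Σ_{β ∈ ℕ^{f(u)}} (ind_O(u) + |β|) y^β`. -/
theorem ind_genFun_formula (n : ℕ) (hn : 1 ≤ n) (O : Set (Fin n →₀ ℕ))
    (hfin : O.Finite) (hne : O.Nonempty) (hO : IsOrderIdeal O)
    (m : Fin n → ℕ) (hm : ∀ i, IsGreatest {a : ℕ | ∃ α ∈ O, α i = a} (m i))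
    (M : Fin n →₀ ℕ) (hM : ∀ i, M i = m i + 1) :
    seriesOfCoeff (fun α => (ind O α : ℚ)) =
      ∑ u ∈ Finset.Iic M, MvPowerSeries.monomial u (1 : ℚ) *
        seriesOfCoeff ((NS {i : Fin n | u i = m i + 1}).indicator
          fun β => (ind O u : ℚ) + (deg β : ℚ)) := by
  classical
  ext α
  rw [coeff_seriesOfCoeff, map_sum]
  set u₀ : Fin n →₀ ℕ := α ⊓ M with hu₀
  have hu₀i : ∀ i, u₀ i = min (α i) (M i) := fun i => Finsupp.inf_apply _ _ _
  have hu₀M : u₀ ≤ M := inf_le_right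
  have hu₀α : u₀ ≤ α := inf_le_left
  rw [Finset.sum_eq_single_of_mem u₀ (Finset.mem_Iic.mpr hu₀M)]
  · rw [MvPowerSeries.coeff_monomial_mul, if_pos hu₀α, one_mul, coeff_seriesOfCoeff]
    have hsupp : (α - u₀) ∈ NS {i : Fin n | u₀ i = m i + 1} := by
      intro i hi
      simp only [Set.mem_setOf_eq] at hi
      have h1 := hu₀i i
      have h2 := hM i
      rw [Finsupp.tsub_apply]
      omega
    rw [Set.indicator_of_mem hsupp]
    have key : ind O α = ind O u₀ + deg (α - u₀) := by
      refine ind_split O hO hne α u₀ hu₀α (fun β hβO hβα => ?_)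
      intro i
      have hβm : β i ≤ m i := (hm i).2 ⟨β, hβO, rfl⟩
      have h1 := hu₀i i
      have h2 := hM i
      have h3 : β i ≤ α i := hβα i
      omega
    rw [key]; push_cast; ring
  · intro u huM hne'
    rw [MvPowerSeries.coeff_monomial_mul]
    split_ifs with hle
    · rw [one_mul, coeff_seriesOfCoeff, Set.indicator_of_notMem]
      intro hmem
      apply hne'
      ext i
      have h1 : u i ≤ M i := Finset.mem_Iic.mp huM i
      have h2 : u i ≤ α i := hle i
      have h3 := hM i
      have h4 := hu₀i i
      have h5 : u i = m i + 1 ∨ α i - u i = 0 := by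
        by_cases h : u i = m i + 1
        · exact Or.inl h
        · right
          have := hmem i (by simpa using h)
          rwa [Finsupp.tsub_apply] at this
      omega
    · rfl
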